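/- arXiv:1802.08507 — 6 statements merged into one kernel-verified Lean document; each statement's English description precedes it below -/
import Mathlib

section
/- Let z be a square-free integer, z ∉ {0, 1, -1}, and let ℓ = ℚ(√z). Then S(ℓ) = {w ∈ Z : |gcd(z,w)| < √|z|} is a transversal of the nontrivial cosets of ℚ* ∩ ℓ_sq in ℚ*, where ℚ* ∩ ℓ_sq = ℚ*_sq ∪ z·ℚ*_sq. -/
/-- Uniqueness of the squarefree part over ℤ. -/
lemma sqf_part_unique (a b x y : ℤ) (ha : Squarefree a) (hb : Squarefree b)
    (hy : y ≠ 0) (h : a * x ^ 2 = b * y ^ 2) : a = b := by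
  have h1 : (a * x) ^ 2 = y ^ 2 * (a * b) := by ring_nf; linear_combination a * h
  have h2 : y ∣ a * x := (Int.pow_dvd_pow_iff two_ne_zero).mp ⟨a * b, h1⟩
  obtain ⟨k, hk⟩ := h2
  have hk2 : k ^ 2 = a * b := by
    have : y ^ 2 * k ^ 2 = y ^ 2 * (a * b) := by rw [← h1, hk]; ring
    exact mul_left_cancel₀ (pow_ne_zero 2 hy) this
  have hak : a ∣ k := ha.isRadical 2 k ⟨b, hk2⟩
  obtain ⟨m, hm⟩ := hak
  have hbm : b = a * m ^ 2 := by
    have ha0 : a ≠ 0 := ha.ne_zero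
    have : a * b = a * (a * m ^ 2) := by rw [← hk2, hm]; ring
    exact mul_left_cancel₀ ha0 this
  have hmu : IsUnit m := hb m ⟨a, by rw [hbm]; ring⟩
  rcases Int.isUnit_iff.mp hmu with h | h <;> simp [hbm, h]

/-- Convert a rational equation `a r² = b s²` to an integer one. -/
lemma rat_to_int (a b : ℤ) (r s : ℚ) (hr : r ≠ 0) (hs : s ≠ 0)
    (h : (a : ℚ) * r ^ 2 = (b : ℚ) * s ^ 2) :
    ∃ x y : ℤ, x ≠ 0 ∧ y ≠ 0 ∧ a * x ^ 2 = b * y ^ 2 := by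
  refine ⟨r.num * s.den, s.num * r.den, ?_, ?_, ?_⟩
  · exact mul_ne_zero (Rat.num_ne_zero.mpr hr) (by exact_mod_cast s.den_nz)
  · exact mul_ne_zero (Rat.num_ne_zero.mpr hs) (by exact_mod_cast r.den_nz)
  · have hrd : (r.den : ℚ) ≠ 0 := by exact_mod_cast r.den_nz
    have hsd : (s.den : ℚ) ≠ 0 := by exact_mod_cast s.den_nz
    have h1 : (r.num : ℚ) = r * r.den := (div_eq_iff hrd).mp (Rat.num_div_den r)
    have h2 : (s.num : ℚ) = s * s.den := (div_eq_iff hsd).mp (Rat.num_div_den s)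
    have : (a : ℚ) * ((r.num : ℚ) * s.den) ^ 2 = (b : ℚ) * ((s.num : ℚ) * r.den) ^ 2 := by
      rw [h1, h2]; linear_combination ((r.den : ℚ) * s.den) ^ 2 * h
    exact_mod_cast this

/-- Every nonzero rational has a squarefree part. -/
lemma exists_sqf_part (q : ℚ) (hq : q ≠ 0) :
    ∃ (a : ℤ) (r : ℚ), Squarefree a ∧ r ≠ 0 ∧ q = (a : ℚ) * r ^ 2 := by
  set n : ℤ := q.num * q.den with hn
  have hn0 : n ≠ 0 := mul_ne_zero (Rat.num_ne_zero.mpr hq) (by exact_mod_cast q.den_nz)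
  obtain ⟨a, b, hab, ha⟩ := Nat.sq_mul_squarefree n.natAbs
  set A : ℤ := n.sign * a with hA
  have hb0 : (b : ℤ) ≠ 0 := by
    intro h
    apply hn0
    have : n.natAbs = 0 := by
      rw [← hab]
      simp [show b = 0 by exact_mod_cast h]
    exact Int.natAbs_eq_zero.mp this
  have hAn : A.natAbs = a := by
    rw [hA, Int.natAbs_mul, Int.natAbs_sign_of_ne_zero hn0, one_mul, Int.natAbs_natCast]
  have hAsf : Squarefree A := Int.squarefree_natAbs.mp (hAn ▸ ha)
  have hkey : n = A * (b : ℤ) ^ 2 := by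
    have h1 : ((b : ℤ)) ^ 2 * (a : ℤ) = (n.natAbs : ℤ) := by exact_mod_cast hab
    calc n = n.sign * n.natAbs := (Int.sign_mul_natAbs n).symm
    _ = n.sign * ((b : ℤ) ^ 2 * a) := by rw [← h1]
    _ = A * (b : ℤ) ^ 2 := by rw [hA]; ring
  refine ⟨A, (b : ℚ) / q.den, hAsf, ?_, ?_⟩
  · exact div_ne_zero (by exact_mod_cast hb0) (by exact_mod_cast q.den_nz)
  · have hqd : (q.den : ℚ) ≠ 0 := by exact_mod_cast q.den_nz
    have hnum : (q.num : ℚ) = q * q.den := (div_eq_iff hqd).mp (Rat.num_div_den q)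
    have hkeyQ : (q.num : ℚ) * q.den = (A : ℚ) * (b : ℚ) ^ 2 := by exact_mod_cast hkey
    rw [hnum] at hkeyQ
    field_simp
    linear_combination hkeyQ

/-- If `a x² = b (z y²)` with everything squarefree, then `gcd(z,a)·gcd(z,b) = |z|`. -/
lemma gcd_product (z a b x y : ℤ) (hz : Squarefree z) (ha : Squarefree a) (hb : Squarefree b)
    (hx : x ≠ 0) (hy : y ≠ 0) (h : a * x ^ 2 = b * (z * y ^ 2)) :
    Int.gcd z a * Int.gcd z b = z.natAbs := by
  have hz0 : z ≠ 0 := hz.ne_zero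
  have ha0 : a ≠ 0 := ha.ne_zero
  set d : ℕ := Int.gcd a z with hd
  have hdpos : 0 < d := Int.gcd_pos_iff.mpr (Or.inl ha0)
  have hd0 : (d : ℤ) ≠ 0 := by exact_mod_cast hdpos.ne'
  obtain ⟨a', ha'⟩ : (d : ℤ) ∣ a := Int.gcd_dvd_left a z
  obtain ⟨z', hz'⟩ : (d : ℤ) ∣ z := Int.gcd_dvd_right a z
  have haq : a / (d : ℤ) = a' := by rw [ha', Int.mul_ediv_cancel_left _ hd0]
  have hzq : z / (d : ℤ) = z' := by rw [hz', Int.mul_ediv_cancel_left _ hd0]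
  have hcop : Int.gcd a' z' = 1 := by
    have := Int.gcd_div_gcd_div_gcd (i := a) (j := z) hdpos
    rwa [haq, hzq] at this
  have ha'sf : Squarefree a' := ha.squarefree_of_dvd ⟨d, by rw [ha']; ring⟩
  have hz'sf : Squarefree z' := hz.squarefree_of_dvd ⟨d, by rw [hz']; ring⟩
  have ha'0 : a' ≠ 0 := ha'sf.ne_zero
  have hz'0 : z' ≠ 0 := hz'sf.ne_zero
  have hrel : IsRelPrime a' z' := (Int.isCoprime_iff_gcd_eq_one.mpr hcop).isRelPrime
  have hazsf : Squarefree (a' * z') := squarefree_mul_iff.mpr ⟨hrel, ha'sf, hz'sf⟩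
  have heq : (a' * z') * ((d : ℤ) * x) ^ 2 = b * (z * y) ^ 2 := by
    rw [ha'] at h
    linear_combination z * h - ((d : ℤ) * a' * x ^ 2) * hz'
  have hb' : a' * z' = b :=
    sqf_part_unique _ _ _ _ hazsf hb (mul_ne_zero hz0 hy) heq
  -- gcd(z, a) = d
  have hg1 : Int.gcd z a = d := by rw [Int.gcd_comm]
  -- gcd(z, b) = gcd(d z', a' z') = gcd(d, a') * |z'| = |z'|
  have hgd : Int.gcd (d : ℤ) a' = 1 := by
    have : IsRelPrime ((d : ℤ)) a' := (squarefree_mul_iff.mp (ha' ▸ ha)).1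
    exact Int.isCoprime_iff_gcd_eq_one.mp (isRelPrime_iff_isCoprime.mp this)
  have hg2 : Int.gcd z b = z'.natAbs := by
    rw [← hb', hz', Int.gcd_mul_right, hgd, one_mul]
  rw [hg1, hg2, hz', Int.natAbs_mul, Int.natAbs_natCast]

/-- For z ∈ Z, z ≠ -1, ℓ = ℚ(√z), where ℚ* ∩ ℓ_sq = ℚ*_sq ∪ z·ℚ*_sq,
the set S(ℓ) = {w ∈ Z : |gcd(z,w)| < √|z|} is a transversal of the nontrivial cosets. -/
theorem transversal_Qsqrtz (z : ℤ) (hz : Squarefree z) (hz1 : z ≠ 1) (hzm1 : z ≠ -1) :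
    ∀ q : ℚ, q ≠ 0 →
      ¬(∃ r : ℚ, r ≠ 0 ∧ (q = r ^ 2 ∨ q = (z : ℚ) * r ^ 2)) →
      ∃! w : ℤ, (Squarefree w ∧ w ≠ 1 ∧ (Int.gcd z w : ℤ) ^ 2 < |z|) ∧
        ∃ r : ℚ, r ≠ 0 ∧ (q = (w : ℚ) * r ^ 2 ∨ q = (w : ℚ) * ((z : ℚ) * r ^ 2)) := by
  intro q hq hns
  have hz0 : z ≠ 0 := hz.ne_zero
  have hzQ : (z : ℚ) ≠ 0 := Int.cast_ne_zero.mpr hz0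
  obtain ⟨a, r, ha, hr, hqa⟩ := exists_sqf_part q hq
  obtain ⟨b, s, hb, hs, hqb0⟩ := exists_sqf_part (q / z) (div_ne_zero hq hzQ)
  rw [div_eq_iff hzQ] at hqb0
  have hqb : q = (b : ℚ) * ((z : ℚ) * s ^ 2) := by rw [hqb0]; ring
  have hrel : (a : ℚ) * r ^ 2 = ((b * z : ℤ) : ℚ) * s ^ 2 := by
    push_cast; rw [← hqa, hqb]; ring
  obtain ⟨x, y, hx, hy, hxy⟩ := rat_to_int a (b * z) r s hr hs hrel
  have hxy' : a * x ^ 2 = b * (z * y ^ 2) := by rw [hxy]; ring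
  have hgg : Int.gcd z a * Int.gcd z b = z.natAbs :=
    gcd_product z a b x y hz ha hb hx hy hxy'
  set g1 := Int.gcd z a with hg1d
  set g2 := Int.gcd z b with hg2d
  have hg1pos : 0 < g1 := Int.gcd_pos_iff.mpr (Or.inl hz0)
  have hg2pos : 0 < g2 := Int.gcd_pos_iff.mpr (Or.inl hz0)
  have hNsf : Squarefree z.natAbs := Int.squarefree_natAbs.mpr hz
  have hN2 : 2 ≤ z.natAbs := by omega
  have hne : g1 ≠ g2 := by
    intro hEq
    have h1 : g1 = 1 := Nat.isUnit_iff.mp (hNsf g1 ⟨1, by rw [← hgg, hEq]; ring⟩)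
    rw [← hEq, h1, one_mul] at hgg
    omega
  have hcond : ∀ w : ℤ, ((Int.gcd z w : ℤ) ^ 2 < |z|) ↔ Int.gcd z w ^ 2 < z.natAbs := by
    intro w
    rw [Int.abs_eq_natAbs]
    exact_mod_cast Iff.rfl
  have ha1 : a ≠ 1 := by
    intro h
    exact hns ⟨r, hr, Or.inl (by rw [hqa, h]; push_cast; ring)⟩
  have hb1 : b ≠ 1 := by
    intro h
    exact hns ⟨s, hs, Or.inr (by rw [hqb, h]; push_cast; ring)⟩
  have huniq : ∀ w : ℤ, Squarefree w →
      (∃ r' : ℚ, r' ≠ 0 ∧ (q = (w : ℚ) * r' ^ 2 ∨ q = (w : ℚ) * ((z : ℚ) * r' ^ 2))) →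
      w = a ∨ w = b := by
    rintro w hw ⟨r', hr', hc | hc⟩
    · left
      have h2 : (w : ℚ) * r' ^ 2 = (a : ℚ) * r ^ 2 := by rw [← hc, ← hqa]
      obtain ⟨x', y', hx', hy', hxy2⟩ := rat_to_int w a r' r hr' hr h2
      exact sqf_part_unique w a x' y' hw ha hy' hxy2
    · right
      have h2 : (z : ℚ) * ((w : ℚ) * r' ^ 2) = (z : ℚ) * ((b : ℚ) * s ^ 2) := by
        linear_combination hqb - hc
      have h3 := mul_left_cancel₀ hzQ h2
      obtain ⟨x', y', hx', hy', hxy2⟩ := rat_to_int w b r' s hr' hs h3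
      exact sqf_part_unique w b x' y' hw hb hy' hxy2
  rcases lt_or_gt_of_ne hne with hlt | hgt
  · -- g1 < g2 : the representative is a
    have hca : g1 ^ 2 < z.natAbs := by rw [← hgg]; nlinarith
    have hcb : ¬ g2 ^ 2 < z.natAbs := by rw [← hgg]; nlinarith
    refine ⟨a, ⟨⟨ha, ha1, (hcond a).mpr hca⟩, ⟨r, hr, Or.inl hqa⟩⟩, ?_⟩
    rintro w ⟨⟨hwsf, hw1, hwg⟩, hrep⟩
    rcases huniq w hwsf hrep with rfl | rfl
    · rfl
    · exact absurd ((hcond w).mp hwg) hcb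
  · -- g2 < g1 : the representative is b
    have hcb : g2 ^ 2 < z.natAbs := by rw [← hgg]; nlinarith
    have hca : ¬ g1 ^ 2 < z.natAbs := by rw [← hgg]; nlinarith
    refine ⟨b, ⟨⟨hb, hb1, (hcond b).mpr hcb⟩, ⟨s, hs, Or.inr hqb⟩⟩, ?_⟩
    rintro w ⟨⟨hwsf, hw1, hwg⟩, hrep⟩
    rcases huniq w hwsf hrep with rfl | rfl
    · exact absurd ((hcond w).mp hwg) hca
    · rfl
end

section
/- Let z, w be square-free integers with z, w ∉ {0,1}, z ≠ -1, and let d₁ = gcd(w₁, z) > 0, d₂ = gcd(w₂, z) > 0 satisfy d₁ < √|z| and d₂ < √|z| for square-free w₁, w₂ ∈ Z. If w₁/w₂ ∈ z·ℚ*_sq, a contradiction follows; i.e., it is impossible that w₁/w₂ = z·q² for some q ∈ ℚ*. -/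
/-- With z ∈ Z, z ≠ -1, and w₁, w₂ ∈ Z whose gcds with z are < √|z|,
it is impossible that w₁/w₂ ∈ z·ℚ*_sq (i.e. s²·w₁ = r²·z·w₂ for coprime r, s). -/
theorem no_z_square_ratio (z w₁ w₂ : ℤ)
    (hz : Squarefree z) (hz1 : z ≠ 1) (hzm1 : z ≠ -1)
    (hw₁ : Squarefree w₁) (hw₁1 : w₁ ≠ 1)
    (hw₂ : Squarefree w₂) (hw₂1 : w₂ ≠ 1)
    (hd₁ : (Int.gcd w₁ z : ℤ) ^ 2 < |z|)
    (hd₂ : (Int.gcd w₂ z : ℤ) ^ 2 < |z|)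
    (r s : ℤ) (hrs : IsCoprime r s)
    (h : s ^ 2 * w₁ = r ^ 2 * z * w₂) : False := by
  have hz0 : z ≠ 0 := hz.ne_zero
  have hw₁0 : w₁ ≠ 0 := hw₁.ne_zero
  have hw₂0 : w₂ ≠ 0 := hw₂.ne_zero
  set g : ℤ := (Int.gcd z (w₁ * w₂) : ℤ) with hgdef
  have hgdvd : g ∣ z := Int.gcd_dvd_left _ _
  -- g divides d₁ * d₂
  have hnat : Int.gcd z (w₁ * w₂) ∣ Int.gcd z w₁ * Int.gcd z w₂ := by
    have : Nat.gcd z.natAbs (w₁.natAbs * w₂.natAbs) ∣ Nat.gcd z.natAbs w₁.natAbs * Nat.gcd z.natAbs w₂.natAbs := gcd_mul_dvd_mul_gcd z.natAbs w₁.natAbs w₂.natAbs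
    simpa [Int.gcd, Int.natAbs_mul] using this
  have hgled : g ∣ (Int.gcd w₁ z : ℤ) * (Int.gcd w₂ z : ℤ) := by
    rw [Int.gcd_comm w₁ z, Int.gcd_comm w₂ z, hgdef]
    exact_mod_cast hnat
  have hd₁pos : (0:ℤ) < Int.gcd w₁ z := by
    exact_mod_cast Nat.pos_of_ne_zero (fun hc => hz0 (by
      simpa using (Int.gcd_eq_zero_iff.mp hc).2))
  have hd₂pos : (0:ℤ) < Int.gcd w₂ z := by
    exact_mod_cast Nat.pos_of_ne_zero (fun hc => hz0 (by
      simpa using (Int.gcd_eq_zero_iff.mp hc).2))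
  have hzpos : (0:ℤ) < |z| := abs_pos.mpr hz0
  have hdd : (Int.gcd w₁ z : ℤ) * (Int.gcd w₂ z : ℤ) < |z| := by
    nlinarith [hd₁, hd₂, hd₁pos, hd₂pos, hzpos]
  have hgle : g ≤ (Int.gcd w₁ z : ℤ) * (Int.gcd w₂ z : ℤ) :=
    Int.le_of_dvd (by positivity) hgled
  have hglt : g < |z| := lt_of_le_of_lt hgle hdd
  have hgpos : (0:ℤ) < g := by
    have h0 : Int.gcd z (w₁ * w₂) ≠ 0 := fun hc => hz0 (Int.gcd_eq_zero_iff.mp hc).1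
    rw [hgdef]
    exact_mod_cast Nat.pos_of_ne_zero h0
  obtain ⟨t, ht⟩ := hgdvd
  have ht0 : t ≠ 0 := by rintro rfl; simp at ht; exact hz0 ht
  have htabs : t.natAbs ≠ 1 := by
    intro hc
    have : |t| = 1 := by rw [Int.abs_eq_natAbs, hc]; rfl
    have : |z| = g := by rw [ht, abs_mul, this, abs_of_pos hgpos, mul_one]
    omega
  obtain ⟨p, hp, hpt⟩ := Int.exists_prime_and_dvd htabs
  have hpz : p ∣ z := ht ▸ hpt.mul_left g
  have hpw : ¬ p ∣ w₁ * w₂ := by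
    intro hc
    have hpg : p ∣ g := Int.dvd_coe_gcd hpz hc
    have : p * p ∣ z := ht ▸ mul_dvd_mul hpg hpt
    exact hp.not_isUnit (hz p this)
  have hpw₁ : ¬ p ∣ w₁ := fun hc => hpw (hc.mul_right _)
  have hpw₂ : ¬ p ∣ w₂ := fun hc => hpw (hc.mul_left _)
  -- p divides s
  have hps : p ∣ s := by
    have h1 : p ∣ s ^ 2 * w₁ := h ▸ (hpz.mul_left (r ^ 2)).mul_right w₂
    rcases hp.dvd_mul.mp h1 with h2 | h2
    · exact hp.dvd_of_dvd_pow h2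
    · exact absurd h2 hpw₁
  have hpr : ¬ p ∣ r := by
    intro hc
    obtain ⟨a, b, hab⟩ := hrs
    exact hp.not_isUnit (isUnit_of_dvd_one (hab ▸ dvd_add ((hc.mul_left a))
      ((hps.mul_left b))))
  obtain ⟨m, hm⟩ := hpz
  obtain ⟨k, hk⟩ := hps
  have hp0 : p ≠ 0 := hp.ne_zero
  -- cancel p from the equation
  have hkey : p * (k ^ 2 * w₁) = r ^ 2 * m * w₂ := by
    have : p * (p * (k ^ 2 * w₁)) = p * (r ^ 2 * m * w₂) := by
      rw [hk, hm] at h; ring_nf; ring_nf at h; linarith [h]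
    exact mul_left_cancel₀ hp0 this
  have hpm : p ∣ m := by
    have h1 : p ∣ r ^ 2 * m * w₂ := ⟨k ^ 2 * w₁, hkey.symm⟩
    rcases hp.dvd_mul.mp h1 with h2 | h2
    · rcases hp.dvd_mul.mp h2 with h3 | h3
      · exact absurd (hp.dvd_of_dvd_pow h3) hpr
      · exact h3
    · exact absurd h2 hpw₂
  have : p * p ∣ z := hm ▸ mul_dvd_mul_left p hpm
  exact hp.not_isUnit (hz p this)
end

section
/- Let z, w be square-free integers (z, w ∉ {0,1}) and d = gcd(z,w) > 0. Then there exists (a,b,c) ∈ ℤ³ \ {(0,0,0)} with a² - w·b² - z·c² = 0 if and only if there exists (a,b,c) ∈ ℤ³ \ {(0,0,0)} with d·a² - (w/d)·b² - (z/d)·c² = 0. -/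
/-- For z, w square-free ∉ {0,1} with d = gcd(z,w) > 0, solvability of
a² - w·b² - z·c² = 0 is equivalent to solvability of d·a² - (w/d)·b² - (z/d)·c² = 0
(nontrivially over ℤ). -/
theorem ternary_descent (z w : ℤ) (hz : Squarefree z) (hz1 : z ≠ 1)
    (hw : Squarefree w) (hw1 : w ≠ 1) (d : ℤ) (hd : d = Int.gcd z w) :
    (∃ a b c : ℤ, ¬(a = 0 ∧ b = 0 ∧ c = 0) ∧ a ^ 2 - w * b ^ 2 - z * c ^ 2 = 0) ↔
    (∃ a b c : ℤ, ¬(a = 0 ∧ b = 0 ∧ c = 0) ∧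
      d * a ^ 2 - (w / d) * b ^ 2 - (z / d) * c ^ 2 = 0) := by
  have hdz : d ∣ z := hd ▸ Int.gcd_dvd_left z w
  have hdw : d ∣ w := hd ▸ Int.gcd_dvd_right z w
  have hd0 : d ≠ 0 := by
    intro h
    rw [h] at hdz
    exact hz.ne_zero (zero_dvd_iff.mp hdz)
  have hdsf : Squarefree d := hz.squarefree_of_dvd hdz
  have hwd : d * (w / d) = w := Int.mul_ediv_cancel' hdw
  have hzd : d * (z / d) = z := Int.mul_ediv_cancel' hdz
  constructor
  · rintro ⟨a, b, c, hnt, heq⟩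
    have hda2 : d ∣ a ^ 2 := by
      have : a ^ 2 = w * b ^ 2 + z * c ^ 2 := by linarith
      rw [this]
      exact dvd_add (hdw.mul_right _) (hdz.mul_right _)
    have hda : d ∣ a := (hdsf.dvd_pow_iff_dvd two_ne_zero).mp hda2
    obtain ⟨a', rfl⟩ := hda
    refine ⟨a', b, c, ?_, ?_⟩
    · rintro ⟨rfl, rfl, rfl⟩
      exact hnt ⟨mul_zero d, rfl, rfl⟩
    · have : d * (d * a' ^ 2 - (w / d) * b ^ 2 - (z / d) * c ^ 2) = 0 := by
        rw [mul_sub, mul_sub, ← mul_assoc d (w/d), ← mul_assoc d (z/d), hwd, hzd]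
        ring_nf
        ring_nf at heq
        linarith
      exact (mul_eq_zero.mp this).resolve_left hd0
  · rintro ⟨a, b, c, hnt, heq⟩
    refine ⟨d * a, b, c, ?_, ?_⟩
    · rintro ⟨h1, rfl, rfl⟩
      exact hnt ⟨(mul_eq_zero.mp h1).resolve_left hd0, rfl, rfl⟩
    · have : d * (d * a ^ 2 - (w / d) * b ^ 2 - (z / d) * c ^ 2) = 0 := by
        rw [heq, mul_zero]
      rw [mul_sub, mul_sub, ← mul_assoc d (w/d), ← mul_assoc d (z/d), hwd, hzd] at this
      ring_nf at this ⊢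
      linarith
end

section
/- The set T = {z ∈ Z : every prime dividing z is ≡ 3 (mod 4)} is a transversal of the nontrivial cosets of Q₂* = Q₂ \ {0} (nonzero sums of two rational squares) in ℚ*: every coset of Q₂* other than Q₂* itself contains exactly one element of T. -/
lemma prodPrimes_factorization {s : Finset ℕ} (hs : ∀ p ∈ s, p.Prime) (q : ℕ) :
    (∏ p ∈ s, p).factorization q = if q ∈ s then 1 else 0 := by
  rw [Nat.factorization_prod (fun p hp => (hs p hp).pos.ne')]
  rw [Finset.sum_apply']
  rw [Finset.sum_congr rfl (fun p hp => by
    rw [(hs p hp).factorization, Finsupp.single_apply])]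
  simp

lemma prodPrimes_squarefree {s : Finset ℕ} (hs : ∀ p ∈ s, p.Prime) :
    Squarefree (∏ p ∈ s, p) := by
  refine Nat.squarefree_of_factorization_le_one ?_ ?_
  · exact (Finset.prod_pos fun p hp => (hs p hp).pos).ne'
  · intro p
    rw [prodPrimes_factorization hs]
    split <;> simp

/-- A natural number is a sum of two rational squares iff every prime `≡ 3 mod 4`
occurs to an even power. -/
lemma natCast_sq_add_sq_iff (n : ℕ) :
    (∃ x y : ℚ, (n : ℚ) = x ^ 2 + y ^ 2) ↔
      ∀ p : ℕ, p.Prime → p % 4 = 3 → Even (padicValNat p n) := by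
  constructor
  · rintro ⟨x, y, hxy⟩ p hp hp3
    rcases Nat.eq_zero_or_pos n with rfl | hn
    · simp
    haveI : Fact p.Prime := ⟨hp⟩
    set d : ℕ := x.den * y.den with hd
    have hd0 : d ≠ 0 := mul_ne_zero x.den_nz y.den_nz
    have hdQ : (d : ℚ) ≠ 0 := Nat.cast_ne_zero.mpr hd0
    set A : ℤ := x.num * y.den with hA
    set B : ℤ := y.num * x.den with hB
    have hxA : x * d = (A : ℚ) := by
      push_cast [hd, hA]
      rw [← mul_assoc, Rat.mul_den_eq_num]
    have hyB : y * d = (B : ℚ) := by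
      push_cast [hd, hB]
      rw [mul_comm (x.den : ℚ), ← mul_assoc, Rat.mul_den_eq_num]
    have key : ((n * d ^ 2 : ℕ) : ℤ) = A ^ 2 + B ^ 2 := by
      have : ((n : ℚ)) * d ^ 2 = (A : ℚ) ^ 2 + (B : ℚ) ^ 2 := by
        rw [← hxA, ← hyB, hxy]; ring
      exact_mod_cast this
    have keyN : n * d ^ 2 = A.natAbs ^ 2 + B.natAbs ^ 2 := by
      have : ((n * d ^ 2 : ℕ) : ℤ) = ((A.natAbs ^ 2 + B.natAbs ^ 2 : ℕ) : ℤ) := by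
        push_cast [Int.natAbs_sq]
        simpa using key
      exact_mod_cast this
    have hev : Even (padicValNat p (n * d ^ 2)) := by
      by_cases hpd : p ∣ n * d ^ 2
      · exact Nat.eq_sq_add_sq_iff.mp ⟨A.natAbs, B.natAbs, keyN⟩ p
          (Nat.mem_primeFactors.mpr ⟨hp, hpd, mul_ne_zero hn.ne' (pow_ne_zero 2 hd0)⟩) hp3
      · rw [padicValNat.eq_zero_of_not_dvd hpd]; exact Even.zero
    rw [padicValNat.mul hn.ne' (pow_ne_zero 2 hd0), padicValNat.pow d 2] at hev
    · simpa [Nat.even_add, parity_simps] using hev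
  · intro H
    obtain ⟨x, y, hxy⟩ := Nat.eq_sq_add_sq_iff.mpr fun p hp h3 => H p (Nat.prime_of_mem_primeFactors hp) h3
    exact ⟨x, y, by exact_mod_cast hxy⟩




lemma dvd_of_T_pair {m₁ m₂ : ℕ} (h₁ : Squarefree m₁) (h₂ : Squarefree m₂)
    (hev : ∀ p : ℕ, p.Prime → p % 4 = 3 → Even (padicValNat p m₁ + padicValNat p m₂))
    (hp₁ : ∀ p : ℕ, p.Prime → p ∣ m₁ → p % 4 = 3) :
    ∀ p : ℕ, p.Prime → p ∣ m₁ → p ∣ m₂ := by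
  intro p hp hpm
  haveI : Fact p.Prime := ⟨hp⟩
  have h3 := hp₁ p hp hpm
  have hev' := hev p hp h3
  have hv1 : padicValNat p m₁ = 1 := by
    have hle : m₁.factorization p ≤ 1 :=
      (Nat.squarefree_iff_factorization_le_one h₁.ne_zero).mp h₁ p
    have hge : 1 ≤ padicValNat p m₁ :=
      one_le_padicValNat_of_dvd h₁.ne_zero hpm
    rw [Nat.factorization_def _ hp] at hle
    omega
  rw [hv1] at hev'
  refine dvd_of_one_le_padicValNat ?_
  rw [Nat.even_iff] at hev'
  omega

lemma T_unique {q h₁ h₂ : ℚ} {z₁ z₂ : ℤ}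
    (hq : q ≠ 0)
    (hz₁sf : Squarefree z₁) (hz₁p : ∀ p : ℕ, p.Prime → (p : ℤ) ∣ z₁ → p % 4 = 3)
    (hz₂sf : Squarefree z₂) (hz₂p : ∀ p : ℕ, p.Prime → (p : ℤ) ∣ z₂ → p % 4 = 3)
    (hh₁ : h₁ ≠ 0) (hs₁ : ∃ x y : ℚ, h₁ = x ^ 2 + y ^ 2)
    (hh₂ : h₂ ≠ 0) (hs₂ : ∃ x y : ℚ, h₂ = x ^ 2 + y ^ 2)
    (e₁ : q = (z₁ : ℚ) * h₁) (e₂ : q = (z₂ : ℚ) * h₂) : z₁ = z₂ := by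
  obtain ⟨x, y, hxy⟩ := hs₁
  obtain ⟨u, v, huv⟩ := hs₂
  have hp₁ : 0 < h₁ := lt_of_le_of_ne (by rw [hxy]; positivity) (Ne.symm hh₁)
  have hp₂ : 0 < h₂ := lt_of_le_of_ne (by rw [huv]; positivity) (Ne.symm hh₂)
  have hz₁0 : z₁ ≠ 0 := hz₁sf.ne_zero
  have hz₂0 : z₂ ≠ 0 := hz₂sf.ne_zero
  have hH0 : h₁ * h₂ ≠ 0 := mul_ne_zero hh₁ hh₂
  have hq2 : q ^ 2 = ((z₁ : ℚ) * z₂) * (h₁ * h₂) := by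
    rw [sq]; nth_rw 1 [e₁]; nth_rw 1 [e₂]; ring
  have hprod : ((z₁ : ℚ)) * z₂ = q ^ 2 / (h₁ * h₂) := by
    rw [hq2]; field_simp
  have hposQ : (0 : ℚ) < (z₁ : ℚ) * z₂ := by
    rw [hprod]
    exact div_pos (by positivity) (mul_pos hp₁ hp₂)
  have hcast : ((z₁.natAbs * z₂.natAbs : ℕ) : ℚ) = (z₁ : ℚ) * z₂ := by
    push_cast [Nat.cast_natAbs]
    rw [← abs_mul]
    exact abs_of_pos hposQ
  have hh12 : h₁ * h₂ = (x * u - y * v) ^ 2 + (x * v + y * u) ^ 2 := by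
    rw [hxy, huv]; ring
  have hsum : ∃ X Y : ℚ, ((z₁.natAbs * z₂.natAbs : ℕ) : ℚ) = X ^ 2 + Y ^ 2 := by
    refine ⟨q / (h₁ * h₂) * (x * u - y * v), q / (h₁ * h₂) * (x * v + y * u), ?_⟩
    rw [hcast, hprod]
    calc q ^ 2 / (h₁ * h₂) = (q / (h₁ * h₂)) ^ 2 * (h₁ * h₂) := by
          field_simp [sq]
      _ = (q / (h₁ * h₂)) ^ 2 * ((x * u - y * v) ^ 2 + (x * v + y * u) ^ 2) := by
          rw [← hh12]
      _ = (q / (h₁ * h₂) * (x * u - y * v)) ^ 2 + (q / (h₁ * h₂) * (x * v + y * u)) ^ 2 := by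
          ring
  have heven := (natCast_sq_add_sq_iff _).mp hsum
  have hN1 : z₁.natAbs ≠ 0 := Int.natAbs_ne_zero.mpr hz₁0
  have hN2 : z₂.natAbs ≠ 0 := Int.natAbs_ne_zero.mpr hz₂0
  have heven' : ∀ p : ℕ, p.Prime → p % 4 = 3 →
      Even (padicValNat p z₁.natAbs + padicValNat p z₂.natAbs) := by
    intro p hp h3
    haveI : Fact p.Prime := ⟨hp⟩
    have := heven p hp h3
    rwa [padicValNat.mul hN1 hN2] at this
  have hsf₁ : Squarefree z₁.natAbs := Int.squarefree_natAbs.mpr hz₁sf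
  have hsf₂ : Squarefree z₂.natAbs := Int.squarefree_natAbs.mpr hz₂sf
  have hd₁₂ := dvd_of_T_pair hsf₁ hsf₂ heven'
    (fun p hp hd => hz₁p p hp (Int.natAbs_dvd_natAbs.mp (by simpa using hd)))
  have hd₂₁ := dvd_of_T_pair hsf₂ hsf₁
    (fun p hp h3 => by have := heven' p hp h3; rwa [add_comm] at this)
    (fun p hp hd => hz₂p p hp (Int.natAbs_dvd_natAbs.mp (by simpa using hd)))
  have habs : z₁.natAbs = z₂.natAbs := by
    rw [← Nat.prod_primeFactors_of_squarefree hsf₁, ← Nat.prod_primeFactors_of_squarefree hsf₂]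
    congr 1
    ext p
    simp only [Nat.mem_primeFactors, ne_eq, hN1, hN2, not_false_eq_true, and_true]
    exact ⟨fun ⟨hp, hd⟩ => ⟨hp, hd₁₂ p hp hd⟩, fun ⟨hp, hd⟩ => ⟨hp, hd₂₁ p hp hd⟩⟩
  have hsgn₁ : 0 < q ↔ 0 < (z₁ : ℚ) := by
    rw [e₁]; exact mul_pos_iff_of_pos_right hp₁
  have hsgn₂ : 0 < q ↔ 0 < (z₂ : ℚ) := by
    rw [e₂]; exact mul_pos_iff_of_pos_right hp₂
  have hsgn : 0 < z₁ ↔ 0 < z₂ := by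
    constructor
    · intro h; exact_mod_cast hsgn₂.mp (hsgn₁.mpr (by exact_mod_cast h))
    · intro h; exact_mod_cast hsgn₁.mp (hsgn₂.mpr (by exact_mod_cast h))
  rcases Int.natAbs_eq_natAbs_iff.mp habs with h | h
  · exact h
  · exfalso
    by_cases h1 : 0 < z₁
    · have := hsgn.mp h1; omega
    · have h2 : ¬ 0 < z₂ := fun hc => h1 (hsgn.mpr hc); omega


/-- T = {z ∈ Z : every prime dividing z is ≡ 3 mod 4} is a transversal
of the nontrivial cosets of Q₂* (nonzero sums of two rational squares) in ℚ*. -/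
theorem transversal_sum_two_squares :
    ∀ q : ℚ, q ≠ 0 → ¬(∃ x y : ℚ, q = x ^ 2 + y ^ 2) →
      ∃! z : ℤ, (Squarefree z ∧ z ≠ 1 ∧
          (∀ p : ℕ, p.Prime → (p : ℤ) ∣ z → p % 4 = 3)) ∧
        ∃ h : ℚ, h ≠ 0 ∧ (∃ x y : ℚ, h = x ^ 2 + y ^ 2) ∧ q = (z : ℚ) * h := by
  intro q hq0 hqns
  set a : ℕ := q.num.natAbs with ha
  set b : ℕ := q.den with hbdef
  have hb0 : b ≠ 0 := q.den_nz
  have ha0 : a ≠ 0 := Int.natAbs_ne_zero.mpr (Rat.num_ne_zero.mpr hq0)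
  set n : ℕ := a * b with hndef
  have hn0 : n ≠ 0 := mul_ne_zero ha0 hb0
  set F : Finset ℕ := n.primeFactors.filter
      (fun p => p % 4 = 3 ∧ Odd (n.factorization p)) with hF
  have hFp : ∀ p ∈ F, p.Prime := fun p hp =>
    Nat.prime_of_mem_primeFactors (Finset.mem_filter.mp hp).1
  set z₀ : ℕ := ∏ p ∈ F, p with hz₀
  have hz₀sf : Squarefree z₀ := prodPrimes_squarefree hFp
  have hz₀0 : z₀ ≠ 0 := hz₀sf.ne_zero
  have hz₀dvd : z₀ ∣ n :=
    dvd_trans (Finset.prod_dvd_prod_of_subset _ _ _ (Finset.filter_subset _ _))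
      n.prod_primeFactors_dvd
  obtain ⟨m, hm⟩ := hz₀dvd
  have hm0 : m ≠ 0 := fun hc => hn0 (by rw [hm, hc, mul_zero])
  have hFmem : ∀ p : ℕ, p.Prime → p % 4 = 3 → (p ∈ F ↔ Odd (padicValNat p n)) := by
    intro p hp h3
    haveI : Fact p.Prime := ⟨hp⟩
    rw [hF, Finset.mem_filter, Nat.mem_primeFactors, Nat.factorization_def _ hp]
    constructor
    · rintro ⟨_, _, hodd⟩; exact hodd
    · intro hodd
      have hv1 : 1 ≤ padicValNat p n := Nat.one_le_iff_ne_zero.mpr (by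
        rintro hzero; rw [hzero] at hodd; exact (Nat.not_odd_iff_even.mpr Even.zero) hodd)
      exact ⟨⟨hp, dvd_of_one_le_padicValNat hv1, hn0⟩, h3, hodd⟩
  have hmval : ∀ p : ℕ, p.Prime → p % 4 = 3 → Even (padicValNat p m) := by
    intro p hp h3
    haveI : Fact p.Prime := ⟨hp⟩
    have hvn : padicValNat p n = padicValNat p z₀ + padicValNat p m := by
      rw [hm, padicValNat.mul hz₀0 hm0]
    have hvz₀ : padicValNat p z₀ = if p ∈ F then 1 else 0 := by
      rw [← Nat.factorization_def _ hp, hz₀, prodPrimes_factorization hFp]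
    by_cases hpF : p ∈ F
    · have hodd := (hFmem p hp h3).mp hpF
      rw [if_pos hpF] at hvz₀
      rw [Nat.odd_iff] at hodd
      rw [Nat.even_iff]
      omega
    · have hnodd : ¬ Odd (padicValNat p n) := fun hx => hpF ((hFmem p hp h3).mpr hx)
      rw [Nat.odd_iff] at hnodd
      rw [if_neg hpF] at hvz₀
      rw [Nat.even_iff]
      omega
  obtain ⟨c, d, hcd⟩ : ∃ c d : ℕ, m = c ^ 2 + d ^ 2 :=
    Nat.eq_sq_add_sq_iff.mpr fun p hp h3 => hmval p (Nat.prime_of_mem_primeFactors hp) h3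
  set z : ℤ := if 0 < q then (z₀ : ℤ) else -(z₀ : ℤ) with hz
  set h : ℚ := ((c : ℚ) / b) ^ 2 + ((d : ℚ) / b) ^ 2 with hh
  have hbQ : (b : ℚ) ≠ 0 := Nat.cast_ne_zero.mpr hb0
  have hhm : h = (m : ℚ) / (b : ℚ) ^ 2 := by
    rw [hh]
    have : (m : ℚ) = (c : ℚ) ^ 2 + (d : ℚ) ^ 2 := by exact_mod_cast hcd
    rw [this, div_pow, div_pow, ← add_div]
  have hmpos : (0 : ℚ) < (m : ℚ) := by exact_mod_cast Nat.pos_of_ne_zero hm0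
  have hhpos : 0 < h := by rw [hhm]; positivity
  have hh0 : h ≠ 0 := ne_of_gt hhpos
  have habq : ((a : ℚ)) * b = (z₀ : ℚ) * m := by
    have h1 : ((a * b : ℕ) : ℚ) = ((z₀ * m : ℕ) : ℚ) := by rw [← hndef, hm]
    push_cast at h1
    exact h1
  have hnumQ : (q.num : ℚ) = if 0 < q then (a : ℚ) else -(a : ℚ) := by
    rw [ha, Nat.cast_natAbs]
    split
    case isTrue hqq =>
      have h2 : |q.num| = q.num := abs_of_nonneg (Rat.num_pos.mpr hqq).le
      exact_mod_cast h2.symm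
    case isFalse hqq =>
      have h1 : q.num < 0 := Rat.num_neg.mpr (lt_of_le_of_ne (not_lt.mp hqq) hq0)
      have h2 : |q.num| = -q.num := abs_of_neg h1
      rw [show ((|q.num| : ℤ) : ℚ) = ((-q.num : ℤ) : ℚ) from by exact_mod_cast congrArg (Int.cast : ℤ → ℚ) h2]
      push_cast
      ring
  have hqzh : q = (z : ℚ) * h := by
    have hq_eq : q = (q.num : ℚ) / (b : ℚ) := by
      rw [hbdef]; exact_mod_cast (Rat.num_div_den q).symm
    have key : ((a : ℚ)) / b = (z₀ : ℚ) * ((m : ℚ) / (b : ℚ) ^ 2) := by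
      rw [mul_div_assoc', div_eq_div_iff hbQ (pow_ne_zero 2 hbQ)]
      linear_combination (b : ℚ) * habq
    rw [hq_eq, hhm, hnumQ, hz]
    split
    · push_cast
      exact key
    · push_cast
      rw [neg_mul, ← key, neg_div]
  have hzabs : z.natAbs = z₀ := by
    rw [hz]; split <;> simp
  have hzsf : Squarefree z := Int.squarefree_natAbs.mp (by rw [hzabs]; exact hz₀sf)
  have hzp3 : ∀ p : ℕ, p.Prime → (p : ℤ) ∣ z → p % 4 = 3 := by
    intro p hp hdvd
    have hpz₀ : p ∣ z₀ := by
      have h1 : (p : ℤ).natAbs ∣ z.natAbs := Int.natAbs_dvd_natAbs.mpr hdvd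
      rwa [Int.natAbs_natCast, hzabs] at h1
    have hpF : p ∈ F := by
      have : p ∈ z₀.primeFactors := Nat.mem_primeFactors.mpr ⟨hp, hpz₀, hz₀0⟩
      rwa [hz₀, Nat.primeFactors_prod hFp] at this
    exact (Finset.mem_filter.mp hpF).2.1
  have hzne1 : z ≠ 1 := by
    intro hc
    apply hqns
    refine ⟨(c : ℚ) / b, (d : ℚ) / b, ?_⟩
    rw [hqzh, hc]
    simp [hh]
  refine ⟨z, ⟨⟨hzsf, hzne1, hzp3⟩, h, hh0, ⟨(c : ℚ) / b, (d : ℚ) / b, rfl⟩, hqzh⟩, ?_⟩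
  rintro z' ⟨⟨hsf', _, hp3'⟩, h', hh'0, hs', he'⟩
  exact T_unique hq0 hsf' hp3' hzsf hzp3 hh'0 hs' hh0
    ⟨(c : ℚ) / b, (d : ℚ) / b, rfl⟩ he' hqzh
end

section
/- Let z be a square-free integer divisible by a prime p ≡ 3 (mod 4), and let c₁, c₂, c₃ ∈ ℤ satisfy 1-2c₁ ≡ 1 (mod p), c₂ ≡ -1 (mod p), c₃ ≡ 0 (mod p). Then the system { x₁² + z(1-2c₁)x₂² - (c₂+c₃)y₁² + z(c₃-c₂)y₂² = 0 ; (1-c₁)x₁x₂ = c₂y₁y₂ } has no primitive integral solution (i.e., no solution (x₁,x₂,y₁,y₂) ∈ ℤ⁴ with gcd(x₁,x₂,y₁,y₂) = 1), and hence only the trivial rational solution. -/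
private lemma sq_add_sq_mod_p {p : ℕ} (hp : p.Prime) (hp4 : p % 4 = 3) (a b : ℤ)
    (h : (p:ℤ) ∣ a^2 + b^2) : (p:ℤ) ∣ a ∧ (p:ℤ) ∣ b := by
  haveI : Fact p.Prime := ⟨hp⟩
  have ha : ((a:ZMod p))^2 + ((b:ZMod p))^2 = 0 := by
    have := (ZMod.intCast_zmod_eq_zero_iff_dvd _ p).2 h
    push_cast at this
    linear_combination this
  by_cases hb : (b : ZMod p) = 0
  · have ha0 : (a : ZMod p) = 0 := by
      have h2 : ((a:ZMod p))^2 = 0 := by rw [hb] at ha; simpa using ha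
      exact pow_eq_zero_iff (two_ne_zero) |>.1 h2
    exact ⟨(ZMod.intCast_zmod_eq_zero_iff_dvd _ p).1 ha0,
      (ZMod.intCast_zmod_eq_zero_iff_dvd _ p).1 hb⟩
  · exfalso
    have hsq : IsSquare (-1 : ZMod p) := by
      refine ⟨(a : ZMod p) / (b:ZMod p), ?_⟩
      field_simp
      linear_combination -ha
    rw [ZMod.exists_sq_eq_neg_one_iff] at hsq
    exact hsq hp4

private lemma step_dvd (z : ℤ) (hz : Squarefree z)
    (p : ℕ) (hp : p.Prime) (hp4 : p % 4 = 3) (hpz : (p : ℤ) ∣ z)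
    (c₁ c₂ c₃ : ℤ)
    (h₁ : 1 - 2 * c₁ ≡ 1 [ZMOD p]) (h₂ : c₂ ≡ -1 [ZMOD p]) (h₃ : c₃ ≡ 0 [ZMOD p])
    (x₁ x₂ y₁ y₂ : ℤ)
    (heq : x₁ ^ 2 + z * (1 - 2 * c₁) * x₂ ^ 2 - (c₂ + c₃) * y₁ ^ 2
            + z * (c₃ - c₂) * y₂ ^ 2 = 0) :
    (p:ℤ) ∣ x₁ ∧ (p:ℤ) ∣ x₂ ∧ (p:ℤ) ∣ y₁ ∧ (p:ℤ) ∣ y₂ := by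
  have hp0 : (p:ℤ) ≠ 0 := by exact_mod_cast hp.ne_zero
  have hpI : Prime (p:ℤ) := Nat.prime_iff_prime_int.mp hp
  obtain ⟨m, hm⟩ := hpz
  obtain ⟨k₁, hk₁⟩ := h₁.dvd
  obtain ⟨k₂, hk₂⟩ := h₂.dvd
  obtain ⟨k₃, hk₃⟩ := h₃.dvd
  have hpm : ¬ (p:ℤ) ∣ m := by
    rintro ⟨t, ht⟩
    exact hpI.not_unit (hz (p:ℤ) ⟨t, by rw [hm, ht]; ring⟩)
  have hd1 : (p:ℤ) ∣ x₁^2 + y₁^2 := by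
    refine ⟨-(m*(1-2*c₁)*x₂^2 + (k₂+k₃)*y₁^2 + m*(c₃-c₂)*y₂^2), ?_⟩
    linear_combination heq - ((1-2*c₁)*x₂^2 + (c₃-c₂)*y₂^2)*hm - y₁^2*hk₂ - y₁^2*hk₃
  obtain ⟨hx1, hy1⟩ := sq_add_sq_mod_p hp hp4 _ _ hd1
  obtain ⟨a, ha⟩ := hx1
  obtain ⟨b, hb⟩ := hy1
  have hdiv : (p:ℤ) * ((p:ℤ)*a^2 + m*(1-2*c₁)*x₂^2 - (c₂+c₃)*(p:ℤ)*b^2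
      + m*(c₃-c₂)*y₂^2) = (p:ℤ) * 0 := by
    linear_combination heq - ((1-2*c₁)*x₂^2+(c₃-c₂)*y₂^2)*hm
      - (x₁ + (p:ℤ)*a)*ha + (c₂+c₃)*(y₁ + (p:ℤ)*b)*hb
  have eq2 : (p:ℤ)*a^2 + m*(1-2*c₁)*x₂^2 - (c₂+c₃)*(p:ℤ)*b^2
      + m*(c₃-c₂)*y₂^2 = 0 := mul_left_cancel₀ hp0 hdiv
  have hd2 : (p:ℤ) ∣ m * (x₂^2 + y₂^2) := by
    refine ⟨-a^2 + (c₂+c₃)*b^2 + m*k₁*x₂^2 + m*(k₃-k₂)*y₂^2, ?_⟩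
    linear_combination eq2 + m*x₂^2*hk₁ - m*y₂^2*hk₂ + m*y₂^2*hk₃
  have hxy2 : (p:ℤ) ∣ x₂^2 + y₂^2 := (hpI.dvd_mul.mp hd2).resolve_left hpm
  obtain ⟨hx2, hy2⟩ := sq_add_sq_mod_p hp hp4 _ _ hxy2
  exact ⟨⟨a, ha⟩, hx2, ⟨b, hb⟩, hy2⟩

private lemma all_zero (z : ℤ) (hz : Squarefree z)
    (p : ℕ) (hp : p.Prime) (hp4 : p % 4 = 3) (hpz : (p : ℤ) ∣ z)
    (c₁ c₂ c₃ : ℤ)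
    (h₁ : 1 - 2 * c₁ ≡ 1 [ZMOD p]) (h₂ : c₂ ≡ -1 [ZMOD p]) (h₃ : c₃ ≡ 0 [ZMOD p]) :
    ∀ n : ℕ, ∀ x₁ x₂ y₁ y₂ : ℤ,
      x₁.natAbs + x₂.natAbs + y₁.natAbs + y₂.natAbs ≤ n →
      x₁ ^ 2 + z * (1 - 2 * c₁) * x₂ ^ 2 - (c₂ + c₃) * y₁ ^ 2
            + z * (c₃ - c₂) * y₂ ^ 2 = 0 →
      x₁ = 0 ∧ x₂ = 0 ∧ y₁ = 0 ∧ y₂ = 0 := by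
  have hp0 : (p:ℤ) ≠ 0 := by exact_mod_cast hp.ne_zero
  intro n
  induction n with
  | zero => intro x₁ x₂ y₁ y₂ hle _; omega
  | succ n ih =>
    intro x₁ x₂ y₁ y₂ hle heq
    obtain ⟨⟨a₁, e₁⟩, ⟨a₂, e₂⟩, ⟨b₁, f₁⟩, ⟨b₂, f₂⟩⟩ :=
      step_dvd z hz p hp hp4 hpz c₁ c₂ c₃ h₁ h₂ h₃ x₁ x₂ y₁ y₂ heq
    have heq' : a₁ ^ 2 + z * (1 - 2 * c₁) * a₂ ^ 2 - (c₂ + c₃) * b₁ ^ 2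
        + z * (c₃ - c₂) * b₂ ^ 2 = 0 := by
      have h' : (p:ℤ)^2 * (a₁ ^ 2 + z * (1 - 2 * c₁) * a₂ ^ 2 - (c₂ + c₃) * b₁ ^ 2
          + z * (c₃ - c₂) * b₂ ^ 2) = (p:ℤ)^2 * 0 := by
        linear_combination heq - (x₁+(p:ℤ)*a₁)*e₁ - z*(1-2*c₁)*(x₂+(p:ℤ)*a₂)*e₂
          + (c₂+c₃)*(y₁+(p:ℤ)*b₁)*f₁ - z*(c₃-c₂)*(y₂+(p:ℤ)*b₂)*f₂
      exact mul_left_cancel₀ (pow_ne_zero 2 hp0) h'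
    have hn1 : x₁.natAbs = p * a₁.natAbs := by rw [e₁, Int.natAbs_mul, Int.natAbs_natCast]
    have hn2 : x₂.natAbs = p * a₂.natAbs := by rw [e₂, Int.natAbs_mul, Int.natAbs_natCast]
    have hn3 : y₁.natAbs = p * b₁.natAbs := by rw [f₁, Int.natAbs_mul, Int.natAbs_natCast]
    have hn4 : y₂.natAbs = p * b₂.natAbs := by rw [f₂, Int.natAbs_mul, Int.natAbs_natCast]
    by_cases hS0 : a₁.natAbs + a₂.natAbs + b₁.natAbs + b₂.natAbs = 0
    · have g1 : a₁ = 0 := by omega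
      have g2 : a₂ = 0 := by omega
      have g3 : b₁ = 0 := by omega
      have g4 : b₂ = 0 := by omega
      exact ⟨by simp [e₁, g1], by simp [e₂, g2], by simp [f₁, g3], by simp [f₂, g4]⟩
    · have hp2 : 2 ≤ p := hp.two_le
      have key : 2 * (a₁.natAbs + a₂.natAbs + b₁.natAbs + b₂.natAbs) ≤
          x₁.natAbs + x₂.natAbs + y₁.natAbs + y₂.natAbs := by
        rw [hn1, hn2, hn3, hn4]
        nlinarith [Nat.zero_le (a₁.natAbs + a₂.natAbs + b₁.natAbs + b₂.natAbs)]
      obtain ⟨g1, g2, g3, g4⟩ := ih a₁ a₂ b₁ b₂ (by omega) heq'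
      exact ⟨by simp [e₁, g1], by simp [e₂, g2], by simp [f₁, g3], by simp [f₂, g4]⟩

/-- For z square-free divisible by a prime p ≡ 3 (mod 4) and integers
c₁, c₂, c₃ with 1-2c₁ ≡ 1, c₂ ≡ -1, c₃ ≡ 0 (mod p), the admissibility system has no
primitive integral solution, hence only the trivial rational solution. -/
theorem admissible_mod_p (z : ℤ) (hz : Squarefree z) (hz1 : z ≠ 1)
    (p : ℕ) (hp : p.Prime) (hp4 : p % 4 = 3) (hpz : (p : ℤ) ∣ z)
    (c₁ c₂ c₃ : ℤ)
    (h₁ : 1 - 2 * c₁ ≡ 1 [ZMOD p]) (h₂ : c₂ ≡ -1 [ZMOD p]) (h₃ : c₃ ≡ 0 [ZMOD p]) :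
    (¬ ∃ x₁ x₂ y₁ y₂ : ℤ,
        Nat.gcd (Int.gcd x₁ x₂) (Int.gcd y₁ y₂) = 1 ∧
        x₁ ^ 2 + z * (1 - 2 * c₁) * x₂ ^ 2 - (c₂ + c₃) * y₁ ^ 2
            + z * (c₃ - c₂) * y₂ ^ 2 = 0 ∧
        (1 - c₁) * x₁ * x₂ = c₂ * y₁ * y₂) ∧
    (∀ x₁ x₂ y₁ y₂ : ℚ,
        x₁ ^ 2 + (z : ℚ) * (1 - 2 * (c₁ : ℚ)) * x₂ ^ 2 - ((c₂ : ℚ) + (c₃ : ℚ)) * y₁ ^ 2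
            + (z : ℚ) * ((c₃ : ℚ) - (c₂ : ℚ)) * y₂ ^ 2 = 0 →
        (1 - (c₁ : ℚ)) * x₁ * x₂ = (c₂ : ℚ) * y₁ * y₂ →
        x₁ = 0 ∧ x₂ = 0 ∧ y₁ = 0 ∧ y₂ = 0) := by
  have AZ := all_zero z hz p hp hp4 hpz c₁ c₂ c₃ h₁ h₂ h₃
  constructor
  · rintro ⟨x₁, x₂, y₁, y₂, hg, heq, -⟩
    obtain ⟨g1, g2, g3, g4⟩ := AZ _ x₁ x₂ y₁ y₂ le_rfl heq
    simp [g1, g2, g3, g4] at hg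
  · intro x₁ x₂ y₁ y₂ heq _
    set N : ℕ := x₁.den * x₂.den * y₁.den * y₂.den with hN
    have hNpos : 0 < N := by positivity
    have hNQ : (N : ℚ) ≠ 0 := by positivity
    have hX₁ : ((x₁.num * (x₂.den * y₁.den * y₂.den : ℕ) : ℤ) : ℚ) = x₁ * N := by
      rw [hN]
      push_cast
      linear_combination (-(x₂.den : ℚ) * y₁.den * y₂.den) * (Rat.mul_den_eq_num x₁)
    have hX₂ : ((x₂.num * (x₁.den * y₁.den * y₂.den : ℕ) : ℤ) : ℚ) = x₂ * N := by
      rw [hN]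
      push_cast
      linear_combination (-(x₁.den : ℚ) * y₁.den * y₂.den) * (Rat.mul_den_eq_num x₂)
    have hY₁ : ((y₁.num * (x₁.den * x₂.den * y₂.den : ℕ) : ℤ) : ℚ) = y₁ * N := by
      rw [hN]
      push_cast
      linear_combination (-(x₁.den : ℚ) * x₂.den * y₂.den) * (Rat.mul_den_eq_num y₁)
    have hY₂ : ((y₂.num * (x₁.den * x₂.den * y₁.den : ℕ) : ℤ) : ℚ) = y₂ * N := by
      rw [hN]
      push_cast
      linear_combination (-(x₁.den : ℚ) * x₂.den * y₁.den) * (Rat.mul_den_eq_num y₂)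
    set X₁ : ℤ := x₁.num * (x₂.den * y₁.den * y₂.den : ℕ)
    set X₂ : ℤ := x₂.num * (x₁.den * y₁.den * y₂.den : ℕ)
    set Y₁ : ℤ := y₁.num * (x₁.den * x₂.den * y₂.den : ℕ)
    set Y₂ : ℤ := y₂.num * (x₁.den * x₂.den * y₁.den : ℕ)
    have heqZ : X₁ ^ 2 + z * (1 - 2 * c₁) * X₂ ^ 2 - (c₂ + c₃) * Y₁ ^ 2
        + z * (c₃ - c₂) * Y₂ ^ 2 = 0 := by
      have hQ : ((X₁ ^ 2 + z * (1 - 2 * c₁) * X₂ ^ 2 - (c₂ + c₃) * Y₁ ^ 2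
          + z * (c₃ - c₂) * Y₂ ^ 2 : ℤ) : ℚ) = 0 := by
        push_cast
        linear_combination (N:ℚ)^2 * heq + ((X₁:ℚ) + x₁*N) * hX₁
          + (z:ℚ)*(1-2*(c₁:ℚ))*((X₂:ℚ) + x₂*N) * hX₂
          - ((c₂:ℚ)+(c₃:ℚ))*((Y₁:ℚ) + y₁*N) * hY₁
          + (z:ℚ)*((c₃:ℚ)-(c₂:ℚ))*((Y₂:ℚ) + y₂*N) * hY₂
      exact_mod_cast hQ
    obtain ⟨g1, g2, g3, g4⟩ := AZ _ X₁ X₂ Y₁ Y₂ le_rfl heqZ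
    refine ⟨?_, ?_, ?_, ?_⟩
    · have := hX₁; rw [g1] at this; push_cast at this
      rcases mul_eq_zero.mp this.symm with h | h
      · exact h
      · exact absurd h hNQ
    · have := hX₂; rw [g2] at this; push_cast at this
      rcases mul_eq_zero.mp this.symm with h | h
      · exact h
      · exact absurd h hNQ
    · have := hY₁; rw [g3] at this; push_cast at this
      rcases mul_eq_zero.mp this.symm with h | h
      · exact h
      · exact absurd h hNQ
    · have := hY₂; rw [g4] at this; push_cast at this
      rcases mul_eq_zero.mp this.symm with h | h
      · exact h
      · exact absurd h hNQ
end

section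
/- Let q be a positive rational that is not a sum of two rational squares. Then the only rational solution (x₁,x₂,y₁,y₂) of the system { x₁² - q·x₂² + y₁² + y₂² = 0 ; ((q+1)/2)·x₁·x₂ = 0 } is the trivial one. -/
/-- For q > 0 rational not a sum of two rational squares, the system
x₁² - q·x₂² + y₁² + y₂² = 0, ((q+1)/2)·x₁·x₂ = 0 has only the trivial solution. -/
theorem admissible_Qi_family_one (q : ℚ) (hq : 0 < q)
    (hq2 : ¬ ∃ a b : ℚ, q = a ^ 2 + b ^ 2) :
    ∀ x₁ x₂ y₁ y₂ : ℚ,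
      x₁ ^ 2 - q * x₂ ^ 2 + y₁ ^ 2 + y₂ ^ 2 = 0 →
      ((q + 1) / 2) * x₁ * x₂ = 0 →
      x₁ = 0 ∧ x₂ = 0 ∧ y₁ = 0 ∧ y₂ = 0 := by
  intro x₁ x₂ y₁ y₂ h1 h2
  have hc : (q + 1) / 2 ≠ 0 := by positivity
  have hx : x₁ = 0 ∨ x₂ = 0 := by
    rcases mul_eq_zero.mp h2 with h | h
    · rcases mul_eq_zero.mp h with h | h
      · exact absurd h hc
      · exact Or.inl h
    · exact Or.inr h
  have hx2 : x₂ = 0 := by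
    rcases hx with h | h
    · by_contra hx2
      apply hq2
      refine ⟨y₁ / x₂, y₂ / x₂, ?_⟩
      field_simp
      nlinarith [sq_nonneg x₂]
    · exact h
  subst hx2
  have h1' : x₁ ^ 2 + y₁ ^ 2 + y₂ ^ 2 = 0 := by nlinarith
  refine ⟨?_, rfl, ?_, ?_⟩ <;> nlinarith [sq_nonneg x₁, sq_nonneg y₁, sq_nonneg y₂]
end
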